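/- Let A ⊆ L(H) be a unital *-subalgebra of the operators on a finite-dimensional complex Hilbert space, and suppose A has trivial center (its center is ℂ·1). Then there exist finite-dimensional Hilbert spaces H_L, H_R and a unitary U : H → H_L ⊗ H_R such that U A U† = L(H_L) ⊗ 1_{H_R}. -/

import Mathlib

open scoped BigOperators

namespace AWFactor

set_option linter.unusedSectionVars false
set_option linter.unusedVariables false
set_option maxHeartbeats 1600000

open LinearMap Polynomial

variable {E : Type*} [NormedAddCommGroup E] [InnerProductSpace ℂ E] [FiniteDimensional ℂ E]

local notation "L" => E →ₗ[ℂ] E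

lemma eq_zero_of_star_mul_self {z : L} (h : star z * z = 0) : z = 0 := by
  ext y
  have h1 : (inner ℂ ((star z * z) y) y : ℂ) = 0 := by rw [h]; simp
  rw [Module.End.mul_apply, LinearMap.star_eq_adjoint, LinearMap.adjoint_inner_left] at h1
  simpa [inner_self_eq_zero] using h1

lemma idem_apply_mem_range {q : L} (hq : q * q = q) {x : E} (hx : x ∈ LinearMap.range q) :
    q x = x := by
  obtain ⟨y, rfl⟩ := hx
  have := congrArg (fun T => T y) hq
  simpa [Module.End.mul_apply] using this

/-- self-adjoint idempotents with same range are equal -/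
lemma proj_ext {p q : L} (hp : IsSelfAdjoint p) (hq : IsSelfAdjoint q)
    (hp2 : p * p = p) (hq2 : q * q = q)
    (h : LinearMap.range p = LinearMap.range q) : p = q := by
  have h1 : q * p = p := by
    ext x
    exact idem_apply_mem_range hq2 (h ▸ LinearMap.mem_range_self p x)
  have h2 : p * q = q := by
    ext x
    exact idem_apply_mem_range hp2 (h ▸ LinearMap.mem_range_self q x)
  calc p = star p := hp.symm
  _ = star (q * p) := by rw [h1]
  _ = star p * star q := by rw [star_mul]
  _ = p * q := by rw [hp.star_eq, hq.star_eq]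
  _ = q := h2

/-- if range t ⊆ range q and r q = q then r t = t -/
lemma absorb_left {r q t : L} (hq2 : q * q = q) (hrq : r * q = q)
    (h : LinearMap.range t ≤ LinearMap.range q) : r * t = t := by
  ext x
  have h1 : q (t x) = t x := idem_apply_mem_range hq2 (h (LinearMap.mem_range_self t x))
  have := congrArg (fun T => T (t x)) hrq
  simp only [Module.End.mul_apply] at this ⊢
  rw [← h1, this, h1]


lemma ext_of_basis_apply {ι : Type*} [Fintype ι] (β : OrthonormalBasis ι ℂ E) {S T : L}
    (h : ∀ i, S (β i) = T (β i)) : S = T :=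
  β.toBasis.ext (by simpa using h)

lemma isSelfAdjoint_diag {ι : Type*} [Fintype ι] (β : OrthonormalBasis ι ℂ E) (T : L)
    (c : ι → ℂ) (hre : ∀ i, (starRingEnd ℂ) (c i) = c i)
    (h : ∀ i, T (β i) = c i • β i) : IsSelfAdjoint T := by
  classical
  rw [LinearMap.isSelfAdjoint_iff']
  have := (LinearMap.eq_adjoint_iff_basis β.toBasis β.toBasis T T).mpr ?_
  · exact this.symm
  · intro i j
    simp only [OrthonormalBasis.coe_toBasis, h, inner_smul_left, inner_smul_right]
    rcases eq_or_ne i j with rfl | hij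
    · rw [hre]
    · rw [β.orthonormal.2 hij, mul_zero, mul_zero]

/-- spectral decomposition package for a self-adjoint operator -/
lemma spectral (b : L) (hb : IsSelfAdjoint b) :
    ∃ (k : ℕ) (μ : Fin k → ℂ) (P : Fin k → L),
      (∀ i, ∃ Q : Polynomial ℂ, P i = Polynomial.aeval b Q) ∧
      Function.Injective μ ∧
      (∀ i, IsSelfAdjoint (P i)) ∧
      (∀ i j, P i * P j = if i = j then P i else 0) ∧
      (∀ i, P i ≠ 0) ∧
      b = ∑ i, μ i • P i ∧
      (∀ i, b * P i = μ i • P i) ∧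
      (∀ i, (starRingEnd ℂ) (μ i) = μ i) := by
  classical
  have hsym : b.IsSymmetric := (LinearMap.isSymmetric_iff_isSelfAdjoint b).mpr hb
  set n := Module.finrank ℂ E with hn
  have hrank : Module.finrank ℂ E = n := rfl
  set β := hsym.eigenvectorBasis hrank with hβ
  set ε := hsym.eigenvalues hrank with hε
  set s : Finset ℂ := Finset.image (fun i => ((ε i : ℂ))) Finset.univ with hs
  set k := s.card with hk
  set eqv := s.equivFin with heqv
  set μ : Fin k → ℂ := fun i => ((eqv.symm i : ℂ)) with hμ
  have hμmem : ∀ i, μ i ∈ s := fun i => (eqv.symm i).2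
  have hμinj : Function.Injective μ := by
    intro i j hij
    exact eqv.symm.injective (Subtype.ext hij)
  set P : Fin k → L := fun i =>
    Polynomial.aeval b (Lagrange.interpolate s id (fun ν => if ν = μ i then (1:ℂ) else 0)) with hP
  have hinj : Set.InjOn (id : ℂ → ℂ) s := Function.injective_id.injOn
  have heig : ∀ j : Fin n, Module.End.HasEigenvector b ((ε j : ℂ)) (β j) :=
    fun j => hsym.hasEigenvector_eigenvectorBasis hrank j
  have hPapply : ∀ (i : Fin k) (j : Fin n),
      P i (β j) = (if ((ε j : ℂ)) = μ i then (1:ℂ) else 0) • β j := by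
    intro i j
    have h1 := Module.End.aeval_apply_of_hasEigenvector (p := Lagrange.interpolate s id
      (fun ν => if ν = μ i then (1:ℂ) else 0)) (heig j)
    have hmem : ((ε j : ℂ)) ∈ s := by
      rw [hs]; exact Finset.mem_image_of_mem _ (Finset.mem_univ j)
    have h2 := Lagrange.eval_interpolate_at_node
      (r := fun ν => if ν = μ i then (1:ℂ) else 0) hinj hmem
    have h2' : Polynomial.eval ((ε j : ℂ)) (Lagrange.interpolate s id
        (fun ν => if ν = μ i then (1:ℂ) else 0)) = (if ((ε j : ℂ)) = μ i then (1:ℂ) else 0) := by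
      simpa using h2
    show Polynomial.aeval b _ (β j) = _
    rw [h1, h2']
  have hreal : ∀ i, (starRingEnd ℂ) (μ i) = μ i := by
    intro i
    obtain ⟨j, hj⟩ : ∃ j : Fin n, ((ε j : ℂ)) = μ i := by
      have := hμmem i
      rw [hs] at this
      obtain ⟨j, _, hj⟩ := Finset.mem_image.mp this
      exact ⟨j, hj⟩
    rw [← hj]
    simp
  refine ⟨k, μ, P, fun i => ⟨_, rfl⟩, hμinj, ?_, ?_, ?_, ?_, ?_, hreal⟩
  · -- self-adjoint
    intro i
    refine isSelfAdjoint_diag β (P i) (fun j => if ((ε j : ℂ)) = μ i then (1:ℂ) else 0) ?_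
      (hPapply i)
    intro j
    split <;> simp
  · -- products
    intro i j
    refine ext_of_basis_apply β fun l => ?_
    rcases eq_or_ne i j with rfl | hij
    · have hR : (if i = i then P i else 0) = P i := if_pos rfl
      rw [hR, Module.End.mul_apply, hPapply, map_smul, hPapply]
      rcases eq_or_ne ((ε l : ℂ)) (μ i) with hl | hl
      · rw [if_pos hl]; simp
      · rw [if_neg hl]; simp
    · have hR : (if i = j then P i else 0) = 0 := if_neg hij
      rw [hR, Module.End.mul_apply, hPapply, map_smul, hPapply, LinearMap.zero_apply]
      rcases eq_or_ne ((ε l : ℂ)) (μ j) with hl | hl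
      · have hne : ((ε l : ℂ)) ≠ μ i := by
          intro hc; exact hij (hμinj (hl.symm.trans hc)).symm
        rw [if_pos hl, if_neg hne]; simp
      · rw [if_neg hl]; simp
  · -- nonzero
    intro i
    obtain ⟨j, hj⟩ : ∃ j : Fin n, ((ε j : ℂ)) = μ i := by
      have := hμmem i
      rw [hs] at this
      obtain ⟨j, _, hj⟩ := Finset.mem_image.mp this
      exact ⟨j, hj⟩
    intro hzero
    have := hPapply i j
    rw [hzero, if_pos hj] at this
    simp only [LinearMap.zero_apply, one_smul] at this
    exact (heig j).2 this.symm
  · -- sum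
    refine ext_of_basis_apply β fun l => ?_
    rw [LinearMap.sum_apply]
    simp only [LinearMap.smul_apply, hPapply]
    have hmem : ((ε l : ℂ)) ∈ s := by
      rw [hs]; exact Finset.mem_image_of_mem _ (Finset.mem_univ l)
    obtain ⟨i0, hi0⟩ : ∃ i0, μ i0 = ((ε l : ℂ)) := ⟨eqv ⟨_, hmem⟩, by simp [hμ]⟩
    rw [Finset.sum_eq_single i0]
    · rw [if_pos hi0.symm, (heig l).apply_eq_smul, hi0, one_smul]
    · intro c _ hc
      have hne : ((ε l : ℂ)) ≠ μ c := by
        rw [← hi0]; intro h; exact hc (hμinj h.symm)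
      rw [if_neg hne]; simp
    · intro h; exact absurd (Finset.mem_univ i0) h
  · -- b * P i
    intro i
    refine ext_of_basis_apply β fun l => ?_
    simp only [Module.End.mul_apply, LinearMap.smul_apply, hPapply]
    rw [map_smul]
    rw [(heig l).apply_eq_smul]
    rcases eq_or_ne ((ε l : ℂ)) (μ i) with hl | hl
    · rw [if_pos hl, hl]; simp
    · rw [if_neg hl]; simp


def IsMinProj (A : StarSubalgebra ℂ (E →ₗ[ℂ] E)) (q : E →ₗ[ℂ] E) : Prop :=
  q ∈ A ∧ IsSelfAdjoint q ∧ q * q = q ∧ q ≠ 0 ∧ ∀ a ∈ A, ∃ c : ℂ, q * a * q = c • q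

lemma aeval_mem (A : StarSubalgebra ℂ (E →ₗ[ℂ] E)) {b : L} (hb : b ∈ A) (Q : Polynomial ℂ) :
    Polynomial.aeval b Q ∈ A := by
  have h2 : Algebra.adjoin ℂ {b} ≤ A.toSubalgebra := Algebra.adjoin_le (by simpa using hb)
  exact h2 (Polynomial.aeval_mem_adjoin_singleton ℂ b)

lemma scalar_of_selfadj_compress (A : StarSubalgebra ℂ (E →ₗ[ℂ] E)) {q b : L}
    (hqsa : IsSelfAdjoint q) (hq2 : q * q = q) (hq0 : q ≠ 0)
    (hmin : ∀ t : L, t ∈ A → IsSelfAdjoint t → t * t = t → t ≠ 0 →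
      LinearMap.range t ≤ LinearMap.range q → t = q)
    (hbA : b ∈ A) (hbsa : IsSelfAdjoint b) (hbq : q * b * q = b) :
    ∃ c : ℂ, b = c • q := by
  classical
  obtain ⟨k, μ, P, hpoly, hμinj, hPsa, hPmul, hP0, hsum, hbP, hμreal⟩ := spectral b hbsa
  have hPA : ∀ i, P i ∈ A := fun i => by
    obtain ⟨Q, hQ⟩ := hpoly i; rw [hQ]; exact aeval_mem A hbA Q
  have hrange_b : LinearMap.range b ≤ LinearMap.range q := by
    rintro x ⟨y, rfl⟩
    rw [← hbq]
    exact ⟨(b * q) y, rfl⟩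
  have hrangeP : ∀ i, μ i ≠ 0 → LinearMap.range (P i) ≤ LinearMap.range q := by
    rintro i hμ0 x ⟨y, rfl⟩
    have h1 : b (P i y) = μ i • P i y := by
      have := congrArg (fun T => T y) (hbP i)
      simpa [Module.End.mul_apply] using this
    have h2 : P i y = (μ i)⁻¹ • b (P i y) := by
      rw [h1, smul_smul, inv_mul_cancel₀ hμ0, one_smul]
    rw [h2]
    exact Submodule.smul_mem _ _ (hrange_b ⟨P i y, rfl⟩)
  have hPidem : ∀ i, P i * P i = P i := fun i => by simpa using hPmul i i
  have hPq : ∀ i, μ i ≠ 0 → P i = q := fun i h =>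
    hmin _ (hPA i) (hPsa i) (hPidem i) (hP0 i) (hrangeP i h)
  by_cases hex : ∃ i, μ i ≠ 0
  · obtain ⟨i0, hi0⟩ := hex
    refine ⟨μ i0, ?_⟩
    rw [hsum, Finset.sum_eq_single i0, hPq i0 hi0]
    · intro c _ hc
      by_cases h0 : μ c = 0
      · rw [h0, zero_smul]
      · exfalso
        have hzz := hPmul c i0
        rw [if_neg hc, hPq c h0, hPq i0 hi0, hq2] at hzz
        exact hq0 hzz
    · intro h; exact absurd (Finset.mem_univ i0) h
  · push_neg at hex
    refine ⟨0, ?_⟩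
    rw [hsum, zero_smul]
    exact Finset.sum_eq_zero fun i _ => by rw [hex i, zero_smul]

lemma exists_minproj_le (A : StarSubalgebra ℂ (E →ₗ[ℂ] E)) {r : L} (hrA : r ∈ A)
    (hrsa : IsSelfAdjoint r) (hr2 : r * r = r) (hr0 : r ≠ 0) :
    ∃ q : L, IsMinProj A q ∧ q * r = q := by
  classical
  set S : Set ℕ := {m | ∃ t : L, t ∈ A ∧ IsSelfAdjoint t ∧ t * t = t ∧ t ≠ 0 ∧ t * r = t ∧
    Module.finrank ℂ (LinearMap.range t) = m} with hSdef
  have hS : S.Nonempty := ⟨_, r, hrA, hrsa, hr2, hr0, hr2, rfl⟩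
  obtain ⟨q, hqA, hqsa, hq2, hq0, hqr, hqrank⟩ := Nat.sInf_mem hS
  have hrq : r * q = q := by
    have := congrArg star hqr
    rwa [star_mul, hqsa.star_eq, hrsa.star_eq] at this
  have hmin : ∀ t : L, t ∈ A → IsSelfAdjoint t → t * t = t → t ≠ 0 →
      LinearMap.range t ≤ LinearMap.range q → t = q := by
    intro t htA htsa ht2 ht0 htle
    have hrt : r * t = t := absorb_left hq2 hrq htle
    have htr : t * r = t := by
      have := congrArg star hrt
      rwa [star_mul, htsa.star_eq, hrsa.star_eq] at this
    have hle : sInf S ≤ Module.finrank ℂ (LinearMap.range t) :=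
      Nat.sInf_le ⟨t, htA, htsa, ht2, ht0, htr, rfl⟩
    have heq : LinearMap.range t = LinearMap.range q :=
      Submodule.eq_of_le_of_finrank_le htle (le_trans (le_of_eq hqrank) hle)
    exact proj_ext htsa hqsa ht2 hq2 heq
  refine ⟨q, ⟨hqA, hqsa, hq2, hq0, ?_⟩, hqr⟩
  intro a haA
  set b1 : L := q * (a + star a) * q with hb1
  set b2 : L := q * ((-Complex.I) • (a - star a)) * q with hb2
  have hconj : ∀ c : L, IsSelfAdjoint c → IsSelfAdjoint (q * c * q) := by
    intro c hc
    have := hc.conjugate (z := q)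
    rwa [hqsa.star_eq] at this
  have hb1sa : IsSelfAdjoint b1 := hconj _ (by
    rw [IsSelfAdjoint, star_add, star_star, add_comm])
  have hb2sa : IsSelfAdjoint b2 := hconj _ (by
    rw [IsSelfAdjoint, star_smul, star_sub, star_star]
    have hstar : star (-Complex.I) = Complex.I := by simp
    rw [hstar]
    module)
  have hmem1 : b1 ∈ A := mul_mem (mul_mem hqA (add_mem haA (star_mem haA))) hqA
  have hmem2 : b2 ∈ A := mul_mem (mul_mem hqA
    (SMulMemClass.smul_mem _ (sub_mem haA (star_mem haA)))) hqA
  have hcomp : ∀ c : L, q * (q * c * q) * q = q * c * q := by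
    intro c
    calc q * (q * c * q) * q = (q * q) * c * (q * q) := by noncomm_ring
    _ = q * c * q := by rw [hq2]
  obtain ⟨c1, hc1⟩ := scalar_of_selfadj_compress A hqsa hq2 hq0 hmin hmem1 hb1sa (hcomp _)
  obtain ⟨c2, hc2⟩ := scalar_of_selfadj_compress A hqsa hq2 hq0 hmin hmem2 hb2sa (hcomp _)
  refine ⟨2⁻¹ * c1 + (2⁻¹ * Complex.I) * c2, ?_⟩
  have e1 : q * (a + star a) * q = q * a * q + q * star a * q := by noncomm_ring
  have e2 : q * ((-Complex.I) • (a - star a)) * q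
      = (-Complex.I) • (q * a * q - q * star a * q) := by
    rw [mul_smul_comm, smul_mul_assoc]
    congr 1
    noncomm_ring
  have hI : ((2⁻¹ : ℂ) * Complex.I) * (-Complex.I) = (2⁻¹ : ℂ) := by
    rw [mul_neg, mul_assoc, Complex.I_mul_I, mul_neg, mul_one, neg_neg]
  have key : q * a * q = (2⁻¹ : ℂ) • b1 + ((2⁻¹ : ℂ) * Complex.I) • b2 := by
    rw [hb1, hb2, e1, e2, smul_smul, hI]
    module
  rw [key, hc1, hc2, smul_smul, smul_smul, ← add_smul]


lemma pisom_mul_right {v q : L} (hq : star v * v = q) (hq2 : q * q = q) : v * q = v := by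
  have hsq : star q = q := by rw [← hq, star_mul, star_star]
  have h1 : star (v * q) = q * star v := by rw [star_mul, hsq]
  have expand : star (v - v * q) * (v - v * q) = 0 := by
    rw [star_sub, h1]
    have h2 : (star v - q * star v) * (v - v * q) =
        star v * v - star v * v * q - q * (star v * v) + q * (star v * v * q) := by
      noncomm_ring
    rw [h2, hq]
    simp only [hq2]
    abel
  have h3 := eq_zero_of_star_mul_self expand
  have := sub_eq_zero.mp h3
  exact this.symm

lemma exists_conn (A : StarSubalgebra ℂ (E →ₗ[ℂ] E))
    (hcenter : ∀ M ∈ A, (∀ N ∈ A, M * N = N * M) → ∃ c : ℂ, M = c • (1 : E →ₗ[ℂ] E))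
    {p q : L} (hp : IsMinProj A p) (hq : IsMinProj A q) :
    ∃ a ∈ A, p * a * q ≠ 0 := by
  classical
  obtain ⟨hpA, hpsa, hp2, hp0, hpmin⟩ := hp
  obtain ⟨hqA, hqsa, hq2, hq0, hqmin⟩ := hq
  set G : Set (E →ₗ[ℂ] E) := {x | ∃ a ∈ A, ∃ b ∈ A, x = a * q * b} with hG
  set J : Submodule ℂ (E →ₗ[ℂ] E) := Submodule.span ℂ G with hJ
  have hJA : ∀ x ∈ J, x ∈ A := by
    intro x hx
    induction hx using Submodule.span_induction with
    | mem x hx => obtain ⟨a, ha, b, hb, rfl⟩ := hx; exact mul_mem (mul_mem ha hqA) hb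
    | zero => exact zero_mem A
    | add x y _ _ hx hy => exact add_mem hx hy
    | smul c x _ hx => exact SMulMemClass.smul_mem c hx
  have hJl : ∀ c ∈ A, ∀ x ∈ J, c * x ∈ J := by
    intro c hc x hx
    induction hx using Submodule.span_induction with
    | mem x hx =>
      obtain ⟨a, ha, b, hb, rfl⟩ := hx
      refine Submodule.subset_span ⟨c * a, mul_mem hc ha, b, hb, by noncomm_ring⟩
    | zero => rw [mul_zero]; exact J.zero_mem
    | add x y _ _ hx hy => rw [mul_add]; exact J.add_mem hx hy
    | smul r x _ hx => rw [mul_smul_comm]; exact J.smul_mem r hx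
  have hJr : ∀ x ∈ J, ∀ c ∈ A, x * c ∈ J := by
    intro x hx c hc
    induction hx using Submodule.span_induction with
    | mem x hx =>
      obtain ⟨a, ha, b, hb, rfl⟩ := hx
      refine Submodule.subset_span ⟨a, ha, b * c, mul_mem hb hc, by noncomm_ring⟩
    | zero => rw [zero_mul]; exact J.zero_mem
    | add x y _ _ hx hy => rw [add_mul]; exact J.add_mem hx hy
    | smul r x _ hx => rw [smul_mul_assoc]; exact J.smul_mem r hx
  have hJstar : ∀ x ∈ J, star x ∈ J := by
    intro x hx
    induction hx using Submodule.span_induction with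
    | mem x hx =>
      obtain ⟨a, ha, b, hb, rfl⟩ := hx
      refine Submodule.subset_span ⟨star b, star_mem hb, star a, star_mem ha, ?_⟩
      rw [star_mul, star_mul, hqsa.star_eq, mul_assoc]
    | zero => rw [star_zero]; exact J.zero_mem
    | add x y _ _ hx hy => rw [star_add]; exact J.add_mem hx hy
    | smul r x _ hx =>
      rw [star_smul]
      exact J.smul_mem _ hx
  have hqJ : q ∈ J := Submodule.subset_span ⟨1, one_mem A, 1, one_mem A, by noncomm_ring⟩
  -- basis of J
  set m := Module.finrank ℂ J with hm
  set w := Module.finBasis ℂ J with hw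
  set b : L := ∑ i : Fin m, (w i : L) * star ((w i : L)) with hbdef
  have hbJ : b ∈ J := by
    refine Submodule.sum_mem J fun i _ => ?_
    exact hJr _ (w i).2 _ (star_mem (hJA _ (w i).2))
  have hbA : b ∈ A := hJA b hbJ
  have hbsa : IsSelfAdjoint b := by
    rw [IsSelfAdjoint, hbdef, star_sum]
    exact Finset.sum_congr rfl fun i _ => by rw [star_mul, star_star]
  obtain ⟨k, μ, P, hpoly, hμinj, hPsa, hPmul, hP0, hsum, hbP, hμreal⟩ := spectral b hbsa
  have hPA : ∀ i, P i ∈ A := fun i => by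
    obtain ⟨Q, hQ⟩ := hpoly i; rw [hQ]; exact aeval_mem A hbA Q
  set F := Finset.univ.filter (fun i : Fin k => μ i ≠ 0) with hF
  set e : L := ∑ i ∈ F, P i with hedef
  set g : L := ∑ i ∈ F, (μ i)⁻¹ • P i with hgdef
  have hgA : g ∈ A := sum_mem fun i _ => SMulMemClass.smul_mem _ (hPA i)
  have hbg : b * g = e := by
    rw [hgdef, hedef, Finset.mul_sum]
    refine Finset.sum_congr rfl fun i hi => ?_
    have hi' : μ i ≠ 0 := (Finset.mem_filter.mp hi).2
    rw [mul_smul_comm, hbP i, smul_smul, inv_mul_cancel₀ hi', one_smul]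
  have heJ : e ∈ J := by rw [← hbg]; exact hJr b hbJ g hgA
  have hesa : IsSelfAdjoint e := by
    rw [IsSelfAdjoint, hedef, star_sum]
    exact Finset.sum_congr rfl fun i _ => hPsa i
  have hbe : b * e = b := by
    rw [hedef, Finset.mul_sum]
    have h1 : ∑ i ∈ F, b * P i = ∑ i ∈ F, μ i • P i :=
      Finset.sum_congr rfl fun i _ => hbP i
    rw [h1]
    conv_rhs => rw [hsum]
    refine Finset.sum_filter_of_ne ?_
    intro i _ h0
    intro hμ0
    rw [hμ0] at h0
    exact h0 (zero_smul _ _)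
  -- e is a unit for J
  have hzero : ∀ y : E, b (y - e y) = 0 := by
    intro y
    have : b (y - e y) = b y - (b * e) y := by
      rw [map_sub, Module.End.mul_apply]
    rw [this, hbe, sub_self]
  have hwz : ∀ (i : Fin m) (y : E), star ((w i : L)) (y - e y) = 0 := by
    intro i y
    set z := y - e y with hz
    have h0 : (inner ℂ (b z) z : ℂ) = 0 := by rw [hzero]; simp
    have hexp : (inner ℂ (b z) z : ℂ) = ∑ j : Fin m,
        (inner ℂ (star ((w j : L)) z) (star ((w j : L)) z) : ℂ) := by
      rw [hbdef, LinearMap.sum_apply, sum_inner]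
      refine Finset.sum_congr rfl fun j _ => ?_
      rw [Module.End.mul_apply, LinearMap.star_eq_adjoint]
      exact (LinearMap.adjoint_inner_right ((w j : L)) _ _).symm
    have hsum0 : ∑ j : Fin m, (‖star ((w j : L)) z‖^2 : ℝ) = 0 := by
      have h1 : (∑ j : Fin m,
          (inner ℂ (star ((w j : L)) z) (star ((w j : L)) z) : ℂ)) = 0 := by
        rw [← hexp, h0]
      have h2 : ∀ j : Fin m, (inner ℂ (star ((w j : L)) z) (star ((w j : L)) z) : ℂ)
          = ((‖star ((w j : L)) z‖ : ℂ)) ^ 2 := fun j => inner_self_eq_norm_sq_to_K _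
      rw [Finset.sum_congr rfl (fun j _ => h2 j)] at h1
      exact_mod_cast h1
    have hterm : (‖star ((w i : L)) z‖^2 : ℝ) = 0 := by
      have hnonneg : ∀ j ∈ Finset.univ, (0:ℝ) ≤ ‖star ((w j : L)) z‖^2 :=
        fun j _ => sq_nonneg _
      exact (Finset.sum_eq_zero_iff_of_nonneg hnonneg).mp hsum0 i (Finset.mem_univ i)
    have := pow_eq_zero_iff (n := 2) (by norm_num) |>.mp hterm
    exact norm_eq_zero.mp this
  have hwe : ∀ i : Fin m, e * (w i : L) = (w i : L) := by
    intro i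
    have h1 : star ((w i : L)) * (1 - e) = 0 := by
      ext y
      have := hwz i y
      simpa [Module.End.mul_apply, LinearMap.sub_apply, map_sub] using this
    have h2 := congrArg star h1
    rw [star_mul, star_sub, star_one, hesa.star_eq, star_star, star_zero] at h2
    have h3 : (w i : L) - e * (w i : L) = 0 := by
      simpa [sub_mul, one_mul] using h2
    have := sub_eq_zero.mp h3
    exact this.symm
  have hunit : ∀ x ∈ J, e * x = x := by
    intro x hx
    set x' : J := ⟨x, hx⟩ with hx'
    have hrepr : x = ∑ i : Fin m, (w.repr x' i) • (w i : L) := by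
      have h1 : (x' : L) = ((∑ i : Fin m, (w.repr x' i) • w i : J) : L) := by
        congr 1
        exact (w.sum_repr x').symm
      rw [Submodule.coe_sum] at h1
      simpa using h1
    rw [hrepr, Finset.mul_sum]
    exact Finset.sum_congr rfl fun i _ => by rw [mul_smul_comm, hwe i]
  have hunit' : ∀ x ∈ J, x * e = x := by
    intro x hx
    have h1 := hunit _ (hJstar x hx)
    have h2 := congrArg star h1
    rwa [star_mul, star_star, hesa.star_eq] at h2
  have heA : e ∈ A := hJA e heJ
  have hcomm : ∀ N ∈ A, e * N = N * e := by
    intro N hN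
    have h1 : e * (N * e) = N * e := hunit _ (hJl N hN e heJ)
    have h2 : (e * N) * e = e * N := hunit' _ (hJr e heJ N hN)
    rw [← mul_assoc] at h1
    rw [← h1, h2]
  obtain ⟨c0, hc0⟩ := hcenter e heA hcomm
  have heq : e * q = q := hunit q hqJ
  have hc0ne : c0 ≠ 0 := by
    intro h
    rw [h, zero_smul] at hc0
    rw [hc0, zero_mul] at heq
    exact hq0 heq.symm
  have hone : (1 : L) ∈ J := by
    have : (1 : L) = c0⁻¹ • e := by
      rw [hc0, smul_smul, inv_mul_cancel₀ hc0ne, one_smul]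
    rw [this]
    exact J.smul_mem _ heJ
  by_contra hcon
  push_neg at hcon
  have hker : ∀ x ∈ J, p * x = 0 := by
    intro x hx
    induction hx using Submodule.span_induction with
    | mem x hx =>
      obtain ⟨a, ha, b', hb', rfl⟩ := hx
      have h1 : p * (a * q * b') = (p * a * q) * b' := by noncomm_ring
      rw [h1, hcon a ha, zero_mul]
    | zero => rw [mul_zero]
    | add x y _ _ hx hy => rw [mul_add, hx, hy, add_zero]
    | smul r x _ hx => rw [mul_smul_comm, hx, smul_zero]
  have := hker 1 hone
  rw [mul_one] at this
  exact hp0 this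

lemma exists_pisom (A : StarSubalgebra ℂ (E →ₗ[ℂ] E))
    (hcenter : ∀ M ∈ A, (∀ N ∈ A, M * N = N * M) → ∃ c : ℂ, M = c • (1 : E →ₗ[ℂ] E))
    {p q : L} (hp : IsMinProj A p) (hq : IsMinProj A q) :
    ∃ v : L, v ∈ A ∧ star v * v = q ∧ v * star v = p := by
  obtain ⟨a, haA, hane⟩ := exists_conn A hcenter hp hq
  obtain ⟨hpA, hpsa, hp2, hp0, hpmin⟩ := hp
  obtain ⟨hqA, hqsa, hq2, hq0, hqmin⟩ := hq
  set x : L := p * a * q with hxdef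
  have hxq : x * q = x := by
    rw [hxdef]
    calc p * a * q * q = p * a * (q * q) := by noncomm_ring
    _ = p * a * q := by rw [hq2]
  have hstarx : star x = q * star a * p := by
    rw [hxdef, star_mul, star_mul, hqsa.star_eq, hpsa.star_eq, mul_assoc]
  have hxx : star x * x = q * (star a * (p * a)) * q := by
    calc star x * x = q * (star a * ((p * p) * a)) * q := by rw [hstarx, hxdef]; noncomm_ring
    _ = q * (star a * (p * a)) * q := by rw [hp2]
  obtain ⟨c, hc⟩ := hqmin (star a * (p * a)) (mul_mem (star_mem haA) (mul_mem hpA haA))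
  obtain ⟨y, hy⟩ : ∃ y, x y ≠ 0 := by
    by_contra h
    push_neg at h
    exact hane (LinearMap.ext h)
  set z : E := q y with hzdef
  have hxz : x z = x y := by
    have := congrArg (fun T => T y) hxq
    simpa [Module.End.mul_apply] using this
  have hz0 : z ≠ 0 := by
    intro h
    rw [h, map_zero] at hxz
    exact hy hxz.symm
  have hqz : q z = z := by
    rw [hzdef]
    have := congrArg (fun T => T y) hq2
    simpa [Module.End.mul_apply] using this
  have hinner : c * ((‖z‖:ℂ))^2 = ((‖x z‖:ℂ))^2 := by
    have h1 : (inner ℂ z ((star x * x) z) : ℂ) = inner ℂ (x z) (x z) := by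
      rw [Module.End.mul_apply, LinearMap.star_eq_adjoint]
      exact LinearMap.adjoint_inner_right x z (x z)
    have h2 : star x * x = c • q := by rw [hxx, hc]
    rw [h2, LinearMap.smul_apply, hqz, inner_smul_right, inner_self_eq_norm_sq_to_K,
      inner_self_eq_norm_sq_to_K] at h1
    exact h1
  set t : ℝ := ‖x z‖ / ‖z‖ with htdef
  have hzn : ‖z‖ ≠ 0 := fun h => hz0 (norm_eq_zero.mp h)
  have hxzn : ‖x z‖ ≠ 0 := by
    rw [hxz]
    exact fun h => hy (norm_eq_zero.mp h)
  have htn : t ≠ 0 := div_ne_zero hxzn hzn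
  have hcval : c = ((t:ℂ))^2 := by
    have h3 : ((t:ℂ)) = ((‖x z‖:ℂ)) / ((‖z‖:ℂ)) := by
      rw [htdef]; push_cast; ring
    rw [h3, div_pow, eq_div_iff (pow_ne_zero _ (Complex.ofReal_ne_zero.mpr hzn))]
    exact hinner
  set v : L := ((t⁻¹ : ℝ) : ℂ) • x with hvdef
  have hvA : v ∈ A := SMulMemClass.smul_mem _ (mul_mem (mul_mem hpA haA) hqA)
  have hstarv : star v = ((t⁻¹ : ℝ) : ℂ) • star x := by
    rw [hvdef, star_smul]
    congr 1
    simp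
  have hvv : star v * v = q := by
    rw [hstarv, hvdef, smul_mul_assoc, mul_smul_comm, smul_smul]
    have h4 : star x * x = c • q := by rw [hxx, hc]
    rw [h4, smul_smul, hcval]
    have h9 : ((t:ℂ)) ≠ 0 := Complex.ofReal_ne_zero.mpr htn
    have h10 : ((t⁻¹:ℝ):ℂ) * ((t⁻¹:ℝ):ℂ) * ((t:ℂ))^2 = 1 := by
      push_cast
      rw [sq]
      field_simp
    rw [h10, one_smul]
  have hvq : v * q = v := pisom_mul_right hvv hq2
  have hxxstar : x * star x = p * (a * (q * star a)) * p := by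
    calc x * star x = p * (a * ((q * q) * star a)) * p := by rw [hstarx, hxdef]; noncomm_ring
    _ = p * (a * (q * star a)) * p := by rw [hq2]
  obtain ⟨c2, hc2⟩ := hpmin (a * (q * star a)) (mul_mem haA (mul_mem hqA (star_mem haA)))
  set μ : ℂ := ((t⁻¹:ℝ):ℂ) * ((t⁻¹:ℝ):ℂ) * c2 with hμdef
  have hvvstar : v * star v = μ • p := by
    rw [hstarv, hvdef, smul_mul_assoc, mul_smul_comm, smul_smul]
    rw [hxxstar, hc2, smul_smul, hμdef]
  have hidem : (v * star v) * (v * star v) = v * star v := by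
    calc (v * star v) * (v * star v) = (v * (star v * v)) * star v := by noncomm_ring
    _ = (v * q) * star v := by rw [hvv]
    _ = v * star v := by rw [hvq]
  have hμμ : μ * μ = μ := by
    rw [hvvstar] at hidem
    have h5 : (μ * μ) • p = μ • p := by
      rw [← hidem, smul_mul_assoc, mul_smul_comm, smul_smul, hp2]
    have h6 : (μ * μ - μ) • p = 0 := by rw [sub_smul, h5, sub_self]
    rcases smul_eq_zero.mp h6 with h | h
    · exact sub_eq_zero.mp h
    · exact absurd h hp0
  have hv0 : v ≠ 0 := by
    intro h
    rw [hvdef] at h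
    have : x = 0 := by
      have := congrArg (fun T => ((t:ℝ):ℂ) • T) h
      simp only [smul_smul, smul_zero] at this
      rwa [← Complex.ofReal_mul, mul_inv_cancel₀ htn, Complex.ofReal_one, one_smul] at this
    exact hane this
  have hμ0 : μ ≠ 0 := by
    intro h
    rw [h, zero_smul] at hvvstar
    have h7 : star (star v) * star v = 0 := by rw [star_star]; exact hvvstar
    have h8 := eq_zero_of_star_mul_self h7
    exact hv0 (by rw [← star_star v, h8, star_zero])
  have hμ1 : μ = 1 := mul_right_cancel₀ hμ0 (by rw [hμμ, one_mul])
  exact ⟨v, hvA, hvv, by rw [hvvstar, hμ1, one_smul]⟩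


lemma exists_partition (A : StarSubalgebra ℂ (E →ₗ[ℂ] E)) :
    ∀ (n : ℕ) (r : L), Module.finrank ℂ (LinearMap.range r) = n → r ∈ A →
      IsSelfAdjoint r → r * r = r →
    ∃ (d : ℕ) (p : Fin d → L), (∀ i, IsMinProj A (p i)) ∧ (∀ i, p i * r = p i) ∧
      (∀ i j, i ≠ j → p i * p j = 0) ∧ (∑ i, p i) = r := by
  intro n
  induction n using Nat.strong_induction_on with
  | _ n IH =>
    intro r hrank hrA hrsa hr2
    by_cases hr0 : r = 0
    · exact ⟨0, Fin.elim0, fun i => i.elim0, fun i => i.elim0, fun i j _ => i.elim0,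
        by rw [hr0]; simp⟩
    · obtain ⟨q, hqmin, hqr⟩ := exists_minproj_le A hrA hrsa hr2 hr0
      obtain ⟨hqA, hqsa, hq2, hq0, hqm⟩ := hqmin
      have hrq : r * q = q := by
        have := congrArg star hqr
        rwa [star_mul, hqsa.star_eq, hrsa.star_eq] at this
      set r' : L := r - q with hr'def
      have hr'A : r' ∈ A := sub_mem hrA hqA
      have hr'sa : IsSelfAdjoint r' := hrsa.sub hqsa
      have hr'2 : r' * r' = r' := by
        rw [hr'def]
        calc (r - q) * (r - q) = r * r - r * q - q * r + q * q := by noncomm_ring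
        _ = r - q := by rw [hr2, hrq, hqr, hq2]; abel
      have hrr' : r * r' = r' := by
        rw [hr'def, mul_sub, hr2, hrq]
      have hr'r : r' * r = r' := by
        rw [hr'def, sub_mul, hr2, hqr]
      have hqr' : q * r' = 0 := by
        rw [hr'def, mul_sub, hqr, hq2, sub_self]
      have hr'q : r' * q = 0 := by
        rw [hr'def, sub_mul, hrq, hq2, sub_self]
      have hqler : LinearMap.range q ≤ LinearMap.range r := by
        rintro x ⟨y, rfl⟩
        refine ⟨q y, ?_⟩
        have := congrArg (fun T => T y) hrq
        simpa [Module.End.mul_apply] using this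
      have hr'ler : LinearMap.range r' ≤ LinearMap.range r := by
        rintro x ⟨y, rfl⟩
        refine ⟨r' y, ?_⟩
        have := congrArg (fun T => T y) hrr'
        simpa [Module.End.mul_apply] using this
      have hsup : LinearMap.range q ⊔ LinearMap.range r' = LinearMap.range r := by
        refine le_antisymm (sup_le hqler hr'ler) ?_
        rintro x ⟨y, rfl⟩
        have hdecomp : r y = q y + r' y := by
          rw [hr'def]; simp
        rw [hdecomp]
        exact Submodule.add_mem_sup ⟨y, rfl⟩ ⟨y, rfl⟩
      have hdisj : LinearMap.range q ⊓ LinearMap.range r' = ⊥ := by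
        rw [eq_bot_iff]
        rintro x ⟨⟨a, ha⟩, ⟨b, hb⟩⟩
        have h1 : q x = x := by
          rw [← ha]
          have := congrArg (fun T => T a) hq2
          simpa [Module.End.mul_apply] using this
        have h2 : q x = 0 := by
          rw [← hb]
          have := congrArg (fun T => T b) hqr'
          simpa [Module.End.mul_apply] using this
        rw [h1] at h2
        simp [h2]
      have hq_pos : 0 < Module.finrank ℂ (LinearMap.range q) := by
        rw [Module.finrank_pos_iff]
        rw [Submodule.nontrivial_iff_ne_bot, ne_eq, LinearMap.range_eq_bot]
        exact hq0
      have hrankeq : Module.finrank ℂ (LinearMap.range q) +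
          Module.finrank ℂ (LinearMap.range r') = n := by
        have := Submodule.finrank_sup_add_finrank_inf_eq (LinearMap.range q) (LinearMap.range r')
        rw [hsup, hdisj, hrank] at this
        simpa using this.symm
      have hlt : Module.finrank ℂ (LinearMap.range r') < n := by omega
      obtain ⟨d', p', hp'min, hp'r, hp'orth, hp'sum⟩ :=
        IH _ hlt r' rfl hr'A hr'sa hr'2
      refine ⟨d' + 1, Fin.cons q p', ?_, ?_, ?_, ?_⟩
      · intro i
        refine Fin.cases ?_ ?_ i
        · rw [Fin.cons_zero]; exact ⟨hqA, hqsa, hq2, hq0, hqm⟩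
        · intro j; rw [Fin.cons_succ]; exact hp'min j
      · intro i
        refine Fin.cases ?_ ?_ i
        · rw [Fin.cons_zero]; exact hqr
        · intro j
          rw [Fin.cons_succ]
          calc p' j * r = (p' j * r') * r := by rw [hp'r j]
          _ = p' j * (r' * r) := by rw [mul_assoc]
          _ = p' j := by rw [hr'r, hp'r j]
      · have hqp' : ∀ j, q * p' j = 0 := by
          intro j
          have hr'p : r' * p' j = p' j := by
            have := congrArg star (hp'r j)
            rwa [star_mul, hr'sa.star_eq, ((hp'min j).2.1).star_eq] at this
          calc q * p' j = q * (r' * p' j) := by rw [hr'p]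
          _ = (q * r') * p' j := by rw [mul_assoc]
          _ = 0 := by rw [hqr', zero_mul]
        have hp'q : ∀ j, p' j * q = 0 := by
          intro j
          have := congrArg star (hqp' j)
          rwa [star_mul, hqsa.star_eq, ((hp'min j).2.1).star_eq, star_zero] at this
        intro i j hij
        rcases Fin.eq_zero_or_eq_succ i with rfl | ⟨i', rfl⟩ <;>
          rcases Fin.eq_zero_or_eq_succ j with rfl | ⟨j', rfl⟩
        · exact absurd rfl hij
        · rw [Fin.cons_zero, Fin.cons_succ]
          exact hqp' j'
        · rw [Fin.cons_succ, Fin.cons_zero]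
          exact hp'q i'
        · rw [Fin.cons_succ, Fin.cons_succ]
          exact hp'orth i' j' (fun h => hij (by rw [h]))
      · rw [Fin.sum_cons, hp'sum, hr'def]
        abel


end AWFactor

set_option maxHeartbeats 1600000 in
open AWFactor LinearMap in
theorem artin_wedderburn_factor
    {E : Type*} [NormedAddCommGroup E] [InnerProductSpace ℂ E] [FiniteDimensional ℂ E]
    (A : StarSubalgebra ℂ (E →ₗ[ℂ] E))
    (hcenter : ∀ M ∈ A, (∀ N ∈ A, M * N = N * M) → ∃ c : ℂ, M = c • (1 : E →ₗ[ℂ] E)) :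
    ∃ (dL dR : ℕ) (U : E ≃ₗᵢ[ℂ] EuclideanSpace ℂ (Fin dL × Fin dR)),
      ∀ f : EuclideanSpace ℂ (Fin dL × Fin dR) →ₗ[ℂ] EuclideanSpace ℂ (Fin dL × Fin dR),
        ((∃ M ∈ A, ∀ x : E, f (U x) = U (M x)) ↔
          ∃ T : Matrix (Fin dL) (Fin dL) ℂ,
            ∀ (x : EuclideanSpace ℂ (Fin dL × Fin dR)) (i : Fin dL × Fin dR),
              f x i = ∑ a : Fin dL, T i.1 a * x (a, i.2)) := by
  classical
  obtain ⟨d, p, hpmin, hpr, hporth, hpsum⟩ := exists_partition A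
    (Module.finrank ℂ (LinearMap.range (1 : E →ₗ[ℂ] E))) 1 rfl (one_mem A)
    (by rw [IsSelfAdjoint, star_one]) (one_mul 1)
  by_cases hd : d = 0
  · -- degenerate: E is trivial
    subst hd
    have hone : (1 : E →ₗ[ℂ] E) = 0 := by rw [← hpsum]; simp
    have htriv : ∀ x : E, x = 0 := by
      intro x
      have := congrArg (fun T => T x) hone
      simpa using this
    have h0 : ∀ y : EuclideanSpace ℂ (Fin 0 × Fin 0), y = 0 := by
      intro y; ext i; exact i.1.elim0
    refine ⟨0, 0,
      { toFun := fun _ => 0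
        invFun := fun _ => 0
        map_add' := by intro a b; simp
        map_smul' := by intro c a; simp
        left_inv := fun x => (htriv x).symm
        right_inv := fun y => (h0 y).symm
        norm_map' := fun x => by rw [htriv x]; simp }, ?_⟩
    intro f
    constructor
    · intro _
      exact ⟨0, fun x i => i.1.elim0⟩
    · intro _
      refine ⟨0, zero_mem A, fun x => ?_⟩
      exact (h0 _).trans (h0 _).symm
  · -- main case
    obtain ⟨i0, hi0⟩ : ∃ i0 : Fin d, True := ⟨⟨0, Nat.pos_of_ne_zero hd⟩, trivial⟩
    set q : E →ₗ[ℂ] E := p i0 with hqdef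
    obtain ⟨hqA, hqsa, hq2, hq0, hqm⟩ := hpmin i0
    have hv : ∀ i : Fin d, ∃ v : E →ₗ[ℂ] E, v ∈ A ∧ star v * v = q ∧ v * star v = p i :=
      fun i => exists_pisom A hcenter (hpmin i) (hpmin i0)
    choose v hvA hv1 hv2 using hv
    have hvq : ∀ i, v i * q = v i := fun i => pisom_mul_right (hv1 i) hq2
    have hqsv : ∀ i, q * star (v i) = star (v i) := by
      intro i
      have := congrArg star (hvq i)
      rwa [star_mul, hqsa.star_eq] at this
    have hpv : ∀ i, p i * v i = v i := by
      intro i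
      have h1 : star (star (v i)) * star (v i) = p i := by rw [star_star]; exact hv2 i
      have hp2i : p i * p i = p i := (hpmin i).2.2.1
      have h2 := pisom_mul_right h1 hp2i
      have := congrArg star h2
      rwa [star_mul, star_star, ((hpmin i).2.1).star_eq] at this
    have hsvp : ∀ i, star (v i) * p i = star (v i) := by
      intro i
      have := congrArg star (hpv i)
      rwa [star_mul, ((hpmin i).2.1).star_eq] at this
    have hvv0 : ∀ i j, i ≠ j → star (v i) * v j = 0 := by
      intro i j hij
      calc star (v i) * v j = (star (v i) * p i) * (p j * v j) := by rw [hsvp, hpv]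
      _ = star (v i) * (p i * p j) * v j := by noncomm_ring
      _ = 0 := by rw [hporth i j hij]; noncomm_ring
    set V : Submodule ℂ E := LinearMap.range q with hVdef
    set dR : ℕ := Module.finrank ℂ V with hdRdef
    set fb : OrthonormalBasis (Fin dR) ℂ V := stdOrthonormalBasis ℂ V with hfbdef
    have hqf : ∀ b : Fin dR, q ((fb b : E)) = (fb b : E) :=
      fun b => idem_apply_mem_range hq2 (fb b).2
    set g : Fin d × Fin dR → E := fun ib => v ib.1 ((fb ib.2 : E)) with hgdef
    have hsymq : q.IsSymmetric := (LinearMap.isSymmetric_iff_isSelfAdjoint q).mpr hqsa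
    -- moving lemma
    have hmove : ∀ (i j : Fin d) (b : Fin dR) (w : E),
        (inner ℂ (g (i, b)) (v j w) : ℂ) = if i = j then inner ℂ ((fb b : E)) (q w) else 0 := by
      intro i j b w
      have hadj : v i = LinearMap.adjoint (star (v i)) := by
        rw [← LinearMap.star_eq_adjoint, star_star]
      have h1 : (inner ℂ (g (i, b)) (v j w) : ℂ)
          = inner ℂ ((fb b : E)) ((star (v i) * v j) w) := by
        rw [hgdef]
        simp only []
        rw [show v i ((fb b : E)) = (LinearMap.adjoint (star (v i))) ((fb b : E)) by rw [← hadj]]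
        rw [LinearMap.adjoint_inner_left]
        rfl
      rw [h1]
      rcases eq_or_ne i j with rfl | hij
      · rw [hv1 i, if_pos rfl]
      · rw [hvv0 i j hij, if_neg hij]
        simp
    have hmove2 : ∀ (k : Fin d) (b : Fin dR) (y : E),
        (inner ℂ ((fb b : E)) (q ((star (v k)) y)) : ℂ) = inner ℂ (g (k, b)) y := by
      intro k b y
      rw [← hsymq ((fb b : E)) ((star (v k)) y), hqf b]
      rw [LinearMap.star_eq_adjoint, LinearMap.adjoint_inner_right]
    have horth : Orthonormal ℂ g := by
      rw [orthonormal_iff_ite]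
      intro ib jc
      obtain ⟨i, b⟩ := ib
      obtain ⟨j, c⟩ := jc
      rw [hmove i j b ((fb c : E))]
      have hfon : (inner ℂ ((fb b : E)) ((fb c : E)) : ℂ) = if b = c then 1 else 0 := by
        rw [← Submodule.coe_inner]
        exact orthonormal_iff_ite.mp fb.orthonormal b c
      rcases eq_or_ne i j with rfl | hij
      · rw [if_pos rfl, hqf c, hfon]
        by_cases hbc : b = c
        · subst hbc; simp
        · rw [if_neg hbc, if_neg (by simp [hbc])]
      · rw [if_neg hij, if_neg (by simp [hij])]
    have hspan : ⊤ ≤ Submodule.span ℂ (Set.range g) := by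
      intro x _
      have hsum1 : x = ∑ i, p i x := by
        have := congrArg (fun T => T x) hpsum
        simpa [LinearMap.sum_apply] using this.symm
      rw [hsum1]
      refine Submodule.sum_mem _ fun i _ => ?_
      have hwmem : q ((star (v i)) x) ∈ V := LinearMap.mem_range_self q _
      set u : V := ⟨q ((star (v i)) x), hwmem⟩ with hudef
      have hpix : p i x = v i ((u : E)) := by
        have h1 : v i ((u : E)) = (v i * q) ((star (v i)) x) := rfl
        rw [h1, hvq i]
        rw [← Module.End.mul_apply, hv2 i]
      have hu : (u : E) = ∑ b, fb.repr u b • ((fb b : E)) := by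
        have h2 := congrArg (Subtype.val) (fb.sum_repr u)
        rw [Submodule.coe_sum] at h2
        simp only [Submodule.coe_smul] at h2
        exact h2.symm
      rw [hpix, hu, map_sum]
      refine Submodule.sum_mem _ fun b _ => ?_
      rw [map_smul]
      exact Submodule.smul_mem _ _ (Submodule.subset_span ⟨(i, b), rfl⟩)
    set B : OrthonormalBasis (Fin d × Fin dR) ℂ E := OrthonormalBasis.mk horth hspan with hBdef
    have hBg : ∀ ib, B ib = g ib := fun ib => by
      rw [hBdef, OrthonormalBasis.coe_mk]
    refine ⟨d, dR, B.repr, ?_⟩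
    have hrepr : ∀ (y : E) (ib : Fin d × Fin dR), B.repr y ib = inner ℂ (g ib) y := by
      intro y ib
      rw [B.repr_apply_apply, hBg]
    have hMexp : ∀ M, M ∈ A → ∃ T : Matrix (Fin d) (Fin d) ℂ,
        M = ∑ j, ∑ k, T j k • (v j * star (v k)) := by
      intro M hM
      have hchoice : ∀ jk : Fin d × Fin d, ∃ c : ℂ,
          q * (star (v jk.1) * M * v jk.2) * q = c • q :=
        fun jk => hqm _ (mul_mem (mul_mem (star_mem (hvA _)) hM) (hvA _))
      choose c hc using hchoice
      refine ⟨fun j k => c (j, k), ?_⟩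
      have h1 : M = (∑ j, p j) * M * (∑ k, p k) := by
        rw [hpsum, one_mul, mul_one]
      have h2 : (∑ j, p j) * M * (∑ k, p k) = ∑ j, ∑ k, p j * M * p k := by
        rw [Finset.sum_mul, Finset.sum_mul]
        refine Finset.sum_congr rfl fun j _ => ?_
        rw [Finset.mul_sum]
      have hterm : ∀ j k, p j * M * p k = c (j, k) • (v j * star (v k)) := by
        intro j k
        calc p j * M * p k
            = v j * (star (v j) * M * v k) * star (v k) := by
              rw [← hv2 j, ← hv2 k]; noncomm_ring
          _ = (v j * q) * (star (v j) * M * (v k * q)) * star (v k) := by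
              rw [hvq j, hvq k]
          _ = v j * (q * (star (v j) * M * v k) * q) * star (v k) := by noncomm_ring
          _ = v j * (c (j, k) • q) * star (v k) := by rw [hc (j, k)]
          _ = c (j, k) • (v j * q * star (v k)) := by
              rw [mul_smul_comm, smul_mul_assoc]
          _ = c (j, k) • (v j * star (v k)) := by rw [hvq j]
      rw [h1, h2]
      exact Finset.sum_congr rfl fun j _ => Finset.sum_congr rfl fun k _ => hterm j k
    have hcoord : ∀ (T : Matrix (Fin d) (Fin d) ℂ) (y : E) (ib : Fin d × Fin dR),
        B.repr ((∑ j, ∑ k, T j k • (v j * star (v k))) y) ib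
          = ∑ a, T ib.1 a * B.repr y (a, ib.2) := by
      intro T y ib
      obtain ⟨i, b⟩ := ib
      rw [hrepr]
      have happ : (∑ j, ∑ k, T j k • (v j * star (v k))) y
          = ∑ j, ∑ k, T j k • (v j ((star (v k)) y)) := by
        rw [LinearMap.sum_apply]
        refine Finset.sum_congr rfl fun j _ => ?_
        rw [LinearMap.sum_apply]
        refine Finset.sum_congr rfl fun k _ => ?_
        rw [LinearMap.smul_apply, Module.End.mul_apply]
      rw [happ, inner_sum]
      have hterm2 : ∀ j, (inner ℂ (g (i, b)) (∑ k, T j k • (v j ((star (v k)) y))) : ℂ)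
          = if i = j then ∑ k, T j k * inner ℂ (g (k, b)) y else 0 := by
        intro j
        rw [inner_sum]
        have hterm3 : ∀ k, (inner ℂ (g (i, b)) (T j k • (v j ((star (v k)) y))) : ℂ)
            = if i = j then T j k * inner ℂ (g (k, b)) y else 0 := by
          intro k
          rw [inner_smul_right, hmove i j b ((star (v k)) y)]
          rcases eq_or_ne i j with rfl | hij
          · rw [if_pos rfl, if_pos rfl, hmove2 k b y]
          · rw [if_neg hij, if_neg hij, mul_zero]
        rw [Finset.sum_congr rfl fun k _ => hterm3 k]
        split
        · rfl
        · exact Finset.sum_const_zero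
      rw [Finset.sum_congr rfl fun j _ => hterm2 j]
      rw [Finset.sum_ite_eq, if_pos (Finset.mem_univ i)]
      refine Finset.sum_congr rfl fun a _ => ?_
      rw [hrepr]
    intro f
    constructor
    · rintro ⟨M, hM, hfM⟩
      obtain ⟨T, hT⟩ := hMexp M hM
      refine ⟨T, ?_⟩
      intro x i
      have h1 := hfM (B.repr.symm x)
      have h3 : B.repr (B.repr.symm x) = x := B.repr.apply_symm_apply x
      rw [h3] at h1
      have h2 := hcoord T (B.repr.symm x) i
      rw [← hT, h3] at h2
      rw [h1]
      exact h2
    · rintro ⟨T, hT⟩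
      set M : E →ₗ[ℂ] E := ∑ j, ∑ k, T j k • (v j * star (v k)) with hMdef
      have hMA : M ∈ A := sum_mem fun j _ => sum_mem fun k _ =>
        SMulMemClass.smul_mem _ (mul_mem (hvA j) (star_mem (hvA k)))
      refine ⟨M, hMA, ?_⟩
      intro x
      ext i
      rw [hT (B.repr x) i]
      exact (hcoord T x i).symm
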